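/- Let q ∈ (0,1], let n ≥ 1 be an integer, and let N, M ∈ ℕ with M ≥ n. Then |1 − (1/(M+1))·Σ_{r=N}^{N+M−n} √(⟨n+r+1⟩_q)/√(⟨r+1⟩_q)| ≤ n/(M+1) + n/(N+1). -/

import Mathlib

/-- `⟨n⟩_q := 1 + q² + q⁴ + ⋯ + q^{2(n−1)} = Σ_{i=0}^{n−1} q^{2i}`. -/
def qBracket (q : ℝ) (n : ℕ) : ℝ := ∑ i ∈ Finset.range n, q ^ (2 * i)

lemma qBracket_pos (q : ℝ) (hq0 : 0 < q) (m : ℕ) : 0 < qBracket q (m + 1) := by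
  unfold qBracket
  apply Finset.sum_pos
  · intro i _; positivity
  · exact Finset.nonempty_range_add_one

lemma qBracket_add (q : ℝ) (a b : ℕ) :
    qBracket q (a + b) = qBracket q a + ∑ i ∈ Finset.Ico a (a + b), q ^ (2 * i) := by
  unfold qBracket
  rw [← Finset.sum_range_add_sum_Ico _ (Nat.le_add_right a b)]

lemma ratio_bounds (q : ℝ) (hq0 : 0 < q) (hq1 : q ≤ 1) (n r : ℕ) :
    1 ≤ Real.sqrt (qBracket q (n + r + 1)) / Real.sqrt (qBracket q (r + 1)) ∧
    Real.sqrt (qBracket q (n + r + 1)) / Real.sqrt (qBracket q (r + 1)) ≤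
      1 + (n : ℝ) / ((r : ℝ) + 1) := by
  have hA := qBracket_pos q hq0 r
  have hB := qBracket_pos q hq0 (n + r)
  have hr1 : (0:ℝ) < (r:ℝ) + 1 := by positivity
  -- monotonicity
  have hsplit : qBracket q (n + r + 1) =
      qBracket q (r + 1) + ∑ i ∈ Finset.Ico (r+1) (r+1+n), q ^ (2 * i) := by
    have := qBracket_add q (r + 1) n
    rw [← this]; ring_nf
  have hextra_nonneg : 0 ≤ ∑ i ∈ Finset.Ico (r+1) (r+1+n), q ^ (2 * i) := by
    apply Finset.sum_nonneg; intro i _; positivity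
  have hmono : qBracket q (r + 1) ≤ qBracket q (n + r + 1) := by
    rw [hsplit]; linarith
  -- lower bound on qBracket q (r+1)
  have hlb : ((r : ℝ) + 1) * q ^ (2 * r) ≤ qBracket q (r + 1) := by
    unfold qBracket
    have hterm : ∀ i ∈ Finset.range (r + 1), q ^ (2 * r) ≤ q ^ (2 * i) := by
      intro i hi
      apply pow_le_pow_of_le_one (le_of_lt hq0) hq1
      simp at hi; omega
    calc ((r : ℝ) + 1) * q ^ (2 * r) = ∑ _i ∈ Finset.range (r+1), q ^ (2 * r) := by
          rw [Finset.sum_const, Finset.card_range, nsmul_eq_mul]; push_cast; ring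
      _ ≤ ∑ i ∈ Finset.range (r+1), q ^ (2 * i) := Finset.sum_le_sum hterm
  -- upper bound on extra
  have hub : ∑ i ∈ Finset.Ico (r+1) (r+1+n), q ^ (2 * i) ≤ (n : ℝ) * q ^ (2 * r) := by
    have : ∀ i ∈ Finset.Ico (r+1) (r+1+n), q ^ (2 * i) ≤ q ^ (2 * r) := by
      intro i hi
      apply pow_le_pow_of_le_one (le_of_lt hq0) hq1
      simp [Finset.mem_Ico] at hi; omega
    calc ∑ i ∈ Finset.Ico (r+1) (r+1+n), q ^ (2 * i)
        ≤ ∑ _i ∈ Finset.Ico (r+1) (r+1+n), q ^ (2 * r) := Finset.sum_le_sum this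
      _ = (n : ℝ) * q ^ (2 * r) := by simp [Finset.sum_const]
  have hratio : qBracket q (n + r + 1) ≤ qBracket q (r + 1) * (1 + (n : ℝ) / ((r : ℝ) + 1)) := by
    have h1 : (n : ℝ) * q ^ (2 * r) ≤ (n : ℝ) / ((r : ℝ) + 1) * qBracket q (r + 1) := by
      rw [div_mul_eq_mul_div, le_div_iff₀ hr1]
      calc (n : ℝ) * q ^ (2*r) * ((r:ℝ)+1) = (n:ℝ) * (((r:ℝ)+1) * q ^ (2*r)) := by ring
        _ ≤ (n:ℝ) * qBracket q (r+1) := by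
            apply mul_le_mul_of_nonneg_left hlb (Nat.cast_nonneg n)
    rw [hsplit]; nlinarith
  constructor
  · rw [le_div_iff₀ (Real.sqrt_pos.mpr hA), one_mul]
    exact Real.sqrt_le_sqrt hmono
  · rw [div_le_iff₀ (Real.sqrt_pos.mpr hA)]
    have h2 : Real.sqrt (qBracket q (n + r + 1)) ≤
        Real.sqrt (qBracket q (r + 1) * (1 + (n : ℝ) / ((r : ℝ) + 1))) :=
      Real.sqrt_le_sqrt hratio
    rw [Real.sqrt_mul (le_of_lt hA)] at h2
    refine h2.trans ?_
    rw [mul_comm]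
    apply mul_le_mul_of_nonneg_right _ (Real.sqrt_nonneg _)
    have ht : (0:ℝ) ≤ (n : ℝ) / ((r : ℝ) + 1) := by positivity
    calc Real.sqrt (1 + (n : ℝ) / ((r : ℝ) + 1))
        ≤ Real.sqrt ((1 + (n : ℝ) / ((r : ℝ) + 1))^2) := by
          apply Real.sqrt_le_sqrt; nlinarith
      _ = 1 + (n : ℝ) / ((r : ℝ) + 1) := Real.sqrt_sq (by linarith)

/-- For `q ∈ (0,1]`, an integer `n ≥ 1` and `N, M ∈ ℕ` with `M ≥ n`:
`|1 − (1/(M+1))·Σ_{r=N}^{N+M−n} √(⟨n+r+1⟩_q)/√(⟨r+1⟩_q)| ≤ n/(M+1) + n/(N+1)`. -/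
theorem statement16 (q : ℝ) (hq0 : 0 < q) (hq1 : q ≤ 1) (n : ℕ) (hn : 1 ≤ n)
    (N M : ℕ) (hMn : n ≤ M) :
    |1 - (1 / ((M : ℝ) + 1)) *
        ∑ r ∈ Finset.Icc N (N + (M - n)),
          Real.sqrt (qBracket q (n + r + 1)) / Real.sqrt (qBracket q (r + 1))| ≤
      (n : ℝ) / ((M : ℝ) + 1) + (n : ℝ) / ((N : ℝ) + 1) := by
  set S := ∑ r ∈ Finset.Icc N (N + (M - n)),
      Real.sqrt (qBracket q (n + r + 1)) / Real.sqrt (qBracket q (r + 1)) with hS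
  have hcard : (Finset.Icc N (N + (M - n))).card = M - n + 1 := by
    rw [Nat.card_Icc]; omega
  have hc : ((M - n : ℕ) : ℝ) = (M : ℝ) - (n : ℝ) := by
    rw [Nat.cast_sub hMn]
  have hN1 : (0:ℝ) < (N:ℝ) + 1 := by positivity
  have hM1 : (0:ℝ) < (M:ℝ) + 1 := by positivity
  have hnN : (0:ℝ) ≤ (n:ℝ) / ((N:ℝ) + 1) := by positivity
  have hSlo : ((M:ℝ) - n + 1) ≤ S := by
    have : ∀ r ∈ Finset.Icc N (N + (M - n)),
        (1:ℝ) ≤ Real.sqrt (qBracket q (n + r + 1)) / Real.sqrt (qBracket q (r + 1)) :=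
      fun r _ => (ratio_bounds q hq0 hq1 n r).1
    have h := Finset.card_nsmul_le_sum _ _ _ this
    rw [hcard, nsmul_eq_mul, mul_one] at h
    push_cast [hMn] at h
    exact h
  have hShi : S ≤ ((M:ℝ) - n + 1) * (1 + (n:ℝ) / ((N:ℝ) + 1)) := by
    have : ∀ r ∈ Finset.Icc N (N + (M - n)),
        Real.sqrt (qBracket q (n + r + 1)) / Real.sqrt (qBracket q (r + 1)) ≤
          1 + (n:ℝ) / ((N:ℝ) + 1) := by
      intro r hr
      have h1 := (ratio_bounds q hq0 hq1 n r).2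
      have hrN : N ≤ r := (Finset.mem_Icc.mp hr).1
      have : (n:ℝ) / ((r:ℝ) + 1) ≤ (n:ℝ) / ((N:ℝ) + 1) := by
        apply div_le_div_of_nonneg_left (Nat.cast_nonneg n) hN1
        have : (N:ℝ) ≤ (r:ℝ) := Nat.cast_le.mpr hrN
        linarith
      linarith
    have h := Finset.sum_le_card_nsmul _ _ _ this
    rw [hcard, nsmul_eq_mul] at h
    push_cast [hMn] at h
    exact h
  rw [abs_le]
  have hnM : (0:ℝ) ≤ (n:ℝ)/((M:ℝ)+1) := by positivity
  constructor
  · have h2 : ((M:ℝ) - n + 1) * (1 + (n:ℝ)/((N:ℝ)+1)) ≤ ((M:ℝ)+1) * (1 + (n:ℝ)/((N:ℝ)+1)) := by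
      have hnn : (0:ℝ) ≤ (n:ℝ) := Nat.cast_nonneg n
      nlinarith
    have h3 : S / ((M:ℝ)+1) ≤ 1 + (n:ℝ)/((N:ℝ)+1) := by
      rw [div_le_iff₀ hM1]
      nlinarith [hShi.trans h2]
    rw [one_div, inv_mul_eq_div]
    linarith
  · have h1 : ((M:ℝ) - n + 1) / ((M:ℝ)+1) ≤ S / ((M:ℝ)+1) := by gcongr
    have h2 : 1 - ((M:ℝ) - n + 1)/((M:ℝ)+1) = (n:ℝ)/((M:ℝ)+1) := by field_simp; ring
    rw [one_div, inv_mul_eq_div]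
    linarith
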